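/- (From traversal avoidance to a risk lower bound, ensemble version.) Let f*_0 = Σ_{S∈𝒮} α_S χ_S be any function, let f̂ be a regression tree ensemble model fit using a regression tree algorithm whose leaf labels are within-leaf mean responses, assume |Y| ≤ M almost surely, let 𝒮' ⊆ 𝒮 be a subcollection, and let T ⊆ {1,…,d} be any set with |T ∩ S| ≥ 2 for each S ∈ 𝒮'. Then the expected L² risk satisfies 𝔯(f̂, f*_0, d, n) ≥ (1 − κδ) · Σ_{S∈𝒮'} α_S², where δ := max_{x ∈ {−1,1}^d} P{ J(x; D_n, Θ) ∩ T ≠ ∅ } and κ := 2M / (Σ_{S∈𝒮'} α_S²)^{1/2}. -/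

import Mathlib

open MeasureTheory ProbabilityTheory

namespace GreedyTrees

/-- The `±1` value of a Boolean coordinate. -/
def sgn (b : Bool) : ℝ := if b then 1 else -1

variable {d n : ℕ}

/-- The Fourier character (monomial) `χ_S` on the Boolean cube `{±1}^d`. -/
def chi (S : Finset (Fin d)) (x : Fin d → Bool) : ℝ := ∏ j ∈ S, sgn (x j)

/-- Expectation with respect to the uniform distribution on `{±1}^d`. -/
noncomputable def cubeMean (f : (Fin d → Bool) → ℝ) : ℝ := (∑ x : Fin d → Bool, f x) / 2 ^ d

/-- The `L²` risk `R(g, f) = E_{X ∼ ν} (g X - f X)²` for `ν` uniform on `{±1}^d`. -/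
noncomputable def cubeRisk (g f : (Fin d → Bool) → ℝ) : ℝ := cubeMean fun x => (g x - f x) ^ 2

/-- Variance with respect to the uniform distribution on `{±1}^d`. -/
noncomputable def cubeVar (f : (Fin d → Bool) → ℝ) : ℝ := cubeMean fun x => (f x - cubeMean f) ^ 2

/-- Supremum norm of a function on the cube. -/
noncomputable def supAbs (f : (Fin d → Bool) → ℝ) : ℝ := ⨆ x, |f x|

/-- Fourier coefficient `α_S` of `f`. -/
noncomputable def fourierCoeff (f : (Fin d → Bool) → ℝ) (S : Finset (Fin d)) : ℝ :=
  cubeMean fun x => f x * chi S x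

open Classical in
/-- Fourier support `𝒮` of `f` : subsets with nonzero Fourier coefficient. -/
noncomputable def fourierSupport (f : (Fin d → Bool) → ℝ) : Finset (Finset (Fin d)) :=
  Finset.univ.filter fun S => fourierCoeff f S ≠ 0

/-- Union of a list of finsets. -/
def listUnion (L : List (Finset (Fin d))) : Finset (Fin d) := L.foldr (· ∪ ·) ∅

/-- Staircase condition: each entry brings in at most one new coordinate. -/
def Staircase (L : List (Finset (Fin d))) : Prop :=
  ∀ (i : ℕ) (h : i < L.length), ((L.get ⟨i, h⟩) \ listUnion (L.take i)).card ≤ 1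

/-- The merged-staircase property (MSP) of a collection of subsets. -/
def MSP (Sc : Finset (Finset (Fin d))) : Prop :=
  ∃ L : List (Finset (Fin d)), L.toFinset = Sc ∧ L.Nodup ∧ Staircase L

/-- `S` is connected to `∅` in the Fourier graph of the collection `Sc`. -/
def ReachesEmpty (Sc : Finset (Finset (Fin d))) (S : Finset (Fin d)) : Prop :=
  ∃ L : List (Finset (Fin d)), (∀ T ∈ L, T ∈ Sc) ∧ S ∈ L ∧ Staircase L

open Classical in
/-- `𝒮_MSP` : the part of the collection connected to `∅` in the Fourier graph. -/
noncomputable def mspPart (Sc : Finset (Finset (Fin d))) : Finset (Finset (Fin d)) :=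
  Sc.filter fun S => ReachesEmpty Sc S

/-- `T` is a traversal of a collection: it meets every member in ≥ 2 coordinates. -/
def IsTraversal (Sc : Finset (Finset (Fin d))) (T : Finset (Fin d)) : Prop :=
  ∀ S ∈ Sc, 2 ≤ (T ∩ S).card

/-- The MSP residual `r_MSP = Σ_{S ∈ 𝒮 \ 𝒮_MSP} α_S χ_S` of `f`. -/
noncomputable def mspResidual (f : (Fin d → Bool) → ℝ) : (Fin d → Bool) → ℝ :=
  fun x => ∑ S ∈ fourierSupport f \ mspPart (fourierSupport f), fourierCoeff f S * chi S x

/-- Total Fourier weight `w(𝒜) = Σ_{S ∈ 𝒜} α_S²` of a collection of vertices. -/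
noncomputable def wt (f : (Fin d → Bool) → ℝ) (A : Finset (Finset (Fin d))) : ℝ :=
  ∑ S ∈ A, fourierCoeff f S ^ 2

/-- The subcube (cell) `{x : x_j = z_j for j ∈ J}` as a finset of points. -/
def subcube (J : Finset (Fin d)) (z : Fin d → Bool) : Finset (Fin d → Bool) :=
  Finset.univ.filter fun x => ∀ j ∈ J, x j = z j

/-- Conditional mean of `f` on a subcube. -/
noncomputable def subcubeMean (f : (Fin d → Bool) → ℝ) (J : Finset (Fin d))
    (z : Fin d → Bool) : ℝ :=
  (∑ x ∈ subcube J z, f x) / (subcube J z).card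

/-- Conditional covariance of `f` and `g` on a subcube. -/
noncomputable def subcubeCov (f g : (Fin d → Bool) → ℝ) (J : Finset (Fin d))
    (z : Fin d → Bool) : ℝ :=
  (∑ x ∈ subcube J z, (f x - subcubeMean f J z) * (g x - subcubeMean g J z)) /
    (subcube J z).card

/-- Conditional variance of `f` on a subcube. -/
noncomputable def subcubeVar (f : (Fin d → Bool) → ℝ) (J : Finset (Fin d))
    (z : Fin d → Bool) : ℝ :=
  subcubeCov f f J z

/-- The restriction of `f` to the subcube `(J, z)` viewed as a function of the
free coordinates. -/
def restrictCube (f : (Fin d → Bool) → ℝ) (J : Finset (Fin d)) (z : Fin d → Bool) :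
    (Fin d → Bool) → ℝ :=
  fun x => f fun j => if j ∈ J then z j else x j

/-- `f` (as a function) satisfies the merged-staircase property. -/
def MSPfun (f : (Fin d → Bool) → ℝ) : Prop := MSP (fourierSupport f)

/-- `f` satisfies the stable merged-staircase property: every restriction to a
subcube satisfies MSP. -/
def SMSPfun (f : (Fin d → Bool) → ℝ) : Prop :=
  ∀ (J : Finset (Fin d)) (z : Fin d → Bool), MSPfun (restrictCube f J z)

/-- `f ∈ SMSP(λ)` : for every subcube on which `f` is nonconstant,
`max_{k ∉ J(C)} Cov²(f(X), X_k | X ∈ C) · 2^{-|J(C) ∩ S*|} ≥ λ`. -/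
def SMSPlam (f : (Fin d → Bool) → ℝ) (Sstar : Finset (Fin d)) (lam : ℝ) : Prop :=
  ∀ (J : Finset (Fin d)) (z : Fin d → Bool),
    (∃ x ∈ subcube J z, ∃ y ∈ subcube J z, f x ≠ f y) →
    ∃ k ∉ J, lam ≤ (subcubeCov f (fun y => sgn (y k)) J z) ^ 2 *
      ((2 : ℝ) ^ (J ∩ Sstar).card)⁻¹

/-- Sub-Gaussian random variable with parameter `σ` (via the MGF bound). -/
def IsSubGaussian {Ω : Type*} [MeasurableSpace Ω] (μ : Measure Ω) (Z : Ω → ℝ)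
    (σ : ℝ) : Prop :=
  ∀ t : ℝ, ∫ ω, Real.exp (t * Z ω) ∂μ ≤ Real.exp (σ ^ 2 * t ^ 2 / 2)

/-- Indices of the samples lying in the cell determined by the values of `x`
on the coordinates in `J`. -/
def cellIdx (X : Fin n → Fin d → Bool) (x : Fin d → Bool) (J : Finset (Fin d)) :
    Finset (Fin n) :=
  Finset.univ.filter fun i => ∀ j ∈ J, X i j = x j

/-- Value of a split criterion `F` at coordinate `k` in a cell: it depends on
the data only through the marginal data `{(X_{ik}, Y_i) : i in the cell}`. -/
def critVal (F : Multiset (Bool × ℝ) → ℝ) (X : Fin n → Fin d → Bool) (Y : Fin n → ℝ)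
    (x : Fin d → Bool) (J : Finset (Fin d)) (k : Fin d) : ℝ :=
  F ((cellIdx X x J).val.map fun i => (X i k, Y i))

/-- Abstract model of a regression tree fitted by a greedy tree algorithm:
for every dataset and query point it records the coordinates split on along the
root-to-leaf path of the query point.  Each split coordinate maximizes a fixed
sign-flip invariant criterion `F` of the marginal data in the current cell,
every split cell contains at least one sample, and the path depends on the
query point only through the coordinates split along it (tree structure). -/
structure GreedyTreeModel (n d : ℕ) where
  F : Multiset (Bool × ℝ) → ℝ
  flip_invariant : ∀ m : Multiset (Bool × ℝ), F (m.map fun p => (!p.1, p.2)) = F m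
  splits : (Fin n → Fin d → Bool) → (Fin n → ℝ) → (Fin d → Bool) → List (Fin d)
  nodup : ∀ X Y x, (splits X Y x).Nodup
  greedy : ∀ X Y x (t : ℕ) (ht : t < (splits X Y x).length) (k : Fin d),
      k ∉ ((splits X Y x).take t).toFinset →
      critVal F X Y x ((splits X Y x).take t).toFinset k ≤
        critVal F X Y x ((splits X Y x).take t).toFinset ((splits X Y x).get ⟨t, ht⟩)
  nonempty_internal : ∀ X Y x (t : ℕ), t < (splits X Y x).length →
      (cellIdx X x ((splits X Y x).take t).toFinset).Nonempty
  consistent : ∀ X Y x x', (∀ j ∈ splits X Y x, x j = x' j) → splits X Y x' = splits X Y x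

/-- The set `J(x; D_n, Θ)` of coordinates split along the query path of `x`. -/
def GreedyTreeModel.queryCoords (M : GreedyTreeModel n d) (X : Fin n → Fin d → Bool)
    (Y : Fin n → ℝ) (x : Fin d → Bool) : Finset (Fin d) :=
  (M.splits X Y x).toFinset

/-- Prediction of the fitted tree: the mean response in the leaf containing `x`. -/
noncomputable def GreedyTreeModel.pred (M : GreedyTreeModel n d)
    (X : Fin n → Fin d → Bool) (Y : Fin n → ℝ) (x : Fin d → Bool) : ℝ :=
  (∑ i ∈ cellIdx X x (M.queryCoords X Y x), Y i) /
    (cellIdx X x (M.queryCoords X Y x)).card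

/-- Mean of a multiset of reals. -/
noncomputable def msetMean (m : Multiset ℝ) : ℝ := m.sum / (m.card : ℝ)

/-- Empirical variance (impurity) of a multiset of reals. -/
noncomputable def msetVar (m : Multiset ℝ) : ℝ :=
  ((m.map fun y => (y - msetMean m) ^ 2).sum) / (m.card : ℝ)

/-- The CART impurity decrease, as a function of the marginal data
`{(X_{ik}, Y_i)}` of a coordinate in a cell. -/
noncomputable def impurityDecrease (m : Multiset (Bool × ℝ)) : ℝ :=
  msetVar (m.map Prod.snd) -
    (((m.filter fun p => p.1 = true).card : ℝ) / (m.card : ℝ)) *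
      msetVar ((m.filter fun p => p.1 = true).map Prod.snd) -
    (((m.filter fun p => p.1 = false).card : ℝ) / (m.card : ℝ)) *
      msetVar ((m.filter fun p => p.1 = false).map Prod.snd)

/-- A CART model: a greedy tree model whose criterion is the impurity decrease,
grown with the minimum impurity decrease stopping rule with threshold `γ`. -/
structure CARTModel (n d : ℕ) (γ : ℝ) extends GreedyTreeModel n d where
  F_eq : F = impurityDecrease
  continue_split : ∀ X Y x (t : ℕ) (ht : t < (splits X Y x).length),
      γ ≤ (((cellIdx X x ((splits X Y x).take t).toFinset).card : ℝ) / (n : ℝ)) *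
        critVal impurityDecrease X Y x ((splits X Y x).take t).toFinset
          ((splits X Y x).get ⟨t, ht⟩)
  stop_leaf : ∀ X Y x (k : Fin d), k ∉ (splits X Y x).toFinset →
      (((cellIdx X x (splits X Y x).toFinset).card : ℝ) / (n : ℝ)) *
        critVal impurityDecrease X Y x (splits X Y x).toFinset k < γ

/-- Number of samples in the subcube `(J, z)`. -/
def cellN (X : Fin n → Fin d → Bool) (J : Finset (Fin d)) (z : Fin d → Bool) : ℕ :=
  (cellIdx X z J).card

/-- Mean response over the samples in the subcube `(J, z)`. -/
noncomputable def cellYbar (X : Fin n → Fin d → Bool) (Y : Fin n → ℝ)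
    (J : Finset (Fin d)) (z : Fin d → Bool) : ℝ :=
  (∑ i ∈ cellIdx X z J, Y i) / (cellN X J z : ℝ)

/-- Empirical square-root impurity decrease
`Δ̂^{1/2}(k; C, D) = √(p_k(C)(1 - p_k(C))) (Ȳ_{T_{k,1}C} - Ȳ_{T_{k,-1}C})`. -/
noncomputable def empSqrtID (X : Fin n → Fin d → Bool) (Y : Fin n → ℝ)
    (J : Finset (Fin d)) (z : Fin d → Bool) (k : Fin d) : ℝ :=
  Real.sqrt (((cellN X (insert k J) (Function.update z k true) : ℝ) / (cellN X J z : ℝ)) *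
      (1 - (cellN X (insert k J) (Function.update z k true) : ℝ) / (cellN X J z : ℝ))) *
    (cellYbar X Y (insert k J) (Function.update z k true) -
      cellYbar X Y (insert k J) (Function.update z k false))

/-- Population square-root impurity decrease
`Δ^{1/2}(k; C) = (E[Y | X ∈ T_{k,1}C] - E[Y | X ∈ T_{k,-1}C]) / 2`
(for zero-mean noise, conditional means of `Y` equal conditional means of `f*`). -/
noncomputable def popSqrtID (f : (Fin d → Bool) → ℝ) (J : Finset (Fin d))
    (z : Fin d → Bool) (k : Fin d) : ℝ :=
  (subcubeMean f (insert k J) (Function.update z k true) -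
    subcubeMean f (insert k J) (Function.update z k false)) / 2

/-- Binary decision tree with axis-aligned splits and real leaf labels. -/
inductive TreeFun (d : ℕ) : Type
  | leaf : ℝ → TreeFun d
  | node : Fin d → TreeFun d → TreeFun d → TreeFun d

/-- Evaluation of a tree as a piecewise constant function on the cube. -/
def TreeFun.eval : TreeFun d → (Fin d → Bool) → ℝ
  | .leaf c, _ => c
  | .node k l r, x => if x k then TreeFun.eval r x else TreeFun.eval l x

/-- Depth of a tree. -/
def TreeFun.depth : TreeFun d → ℕ
  | .leaf _ => 0
  | .node _ l r => max (TreeFun.depth l) (TreeFun.depth r) + 1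

/-- All leaf labels bounded by `M` in absolute value. -/
def TreeFun.leafBound (M : ℝ) : TreeFun d → Prop
  | .leaf c => |c| ≤ M
  | .node _ l r => TreeFun.leafBound M l ∧ TreeFun.leafBound M r

/-- Empirical `L²` risk of a tree on a dataset. -/
noncomputable def empRisk (D : Fin n → (Fin d → Bool) × ℝ) (t : TreeFun d) : ℝ :=
  (∑ i, ((D i).2 - t.eval (D i).1) ^ 2) / n

/-- A greedy tree grown along the query path of a point with every cell being
split (no stopping rule): the path has full length `d`. -/
structure FullGreedyPath (n d : ℕ) where
  F : Multiset (Bool × ℝ) → ℝ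
  flip_invariant : ∀ m : Multiset (Bool × ℝ), F (m.map fun p => (!p.1, p.2)) = F m
  splits : (Fin n → Fin d → Bool) → (Fin n → ℝ) → (Fin d → Bool) → List (Fin d)
  nodup : ∀ X Y x, (splits X Y x).Nodup
  length_eq : ∀ X Y x, (splits X Y x).length = d
  greedy : ∀ X Y x (t : ℕ) (ht : t < (splits X Y x).length) (k : Fin d),
      k ∉ ((splits X Y x).take t).toFinset →
      critVal F X Y x ((splits X Y x).take t).toFinset k ≤
        critVal F X Y x ((splits X Y x).take t).toFinset ((splits X Y x).get ⟨t, ht⟩)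


section AuxProofS5

lemma sgn_mul_self' (b : Bool) : sgn b * sgn b = 1 := by cases b <;> norm_num [sgn]

lemma sgn_not' (b : Bool) : sgn (!b) = - sgn b := by cases b <;> norm_num [sgn]

lemma div_le_div_same' {a b c : ℝ} (h : a ≤ b) (hc : 0 < c) : a / c ≤ b / c := by
  rw [div_eq_mul_inv, div_eq_mul_inv]
  exact mul_le_mul_of_nonneg_right h (inv_nonneg.mpr hc.le)

lemma sum_involution_zero {d : ℕ} (j0 : Fin d) (F : (Fin d → Bool) → ℝ)
    (h : ∀ x, F x + F (Function.update x j0 (!x j0)) = 0) :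
    ∑ x : Fin d → Bool, F x = 0 := by
  classical
  refine Finset.sum_involution (fun x _ => Function.update x j0 (!x j0))
    (fun x _ => h x) (fun x _ _ hx => ?_) (fun x _ => Finset.mem_univ _) (fun x _ => ?_)
  · have := congrFun hx j0
    simp at this
  · simp [Function.update_idem]

lemma chi_update_mem {d : ℕ} {S : Finset (Fin d)} {j0 : Fin d} (hj : j0 ∈ S)
    (x : Fin d → Bool) :
    chi S (Function.update x j0 (!x j0)) = - chi S x := by
  classical
  unfold chi
  have h1 : ∏ j ∈ S.erase j0, sgn (Function.update x j0 (!x j0) j)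
      = ∏ j ∈ S.erase j0, sgn (x j) :=
    Finset.prod_congr rfl fun j hjm => by
      rw [Function.update_of_ne (Finset.ne_of_mem_erase hjm)]
  rw [← Finset.mul_prod_erase S _ hj, ← Finset.mul_prod_erase S (fun j => sgn (x j)) hj, h1,
    Function.update_self, sgn_not']
  ring

lemma chi_update_not_mem {d : ℕ} {S : Finset (Fin d)} {j0 : Fin d} (hj : j0 ∉ S)
    (x : Fin d → Bool) (b : Bool) :
    chi S (Function.update x j0 b) = chi S x :=
  Finset.prod_congr rfl fun j hjm => by
    rw [Function.update_of_ne (by rintro rfl; exact hj hjm)]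

lemma sum_chi_mul_chi {d : ℕ} (S S' : Finset (Fin d)) :
    ∑ x : Fin d → Bool, chi S x * chi S' x = if S = S' then (2:ℝ)^d else 0 := by
  classical
  by_cases h : S = S'
  · subst h
    rw [if_pos rfl]
    have h1 : ∀ x : Fin d → Bool, chi S x * chi S x = 1 := fun x => by
      rw [chi, ← Finset.prod_mul_distrib]
      exact Finset.prod_eq_one fun j _ => sgn_mul_self' _
    simp only [h1, Finset.sum_const, Finset.card_univ, nsmul_eq_mul, mul_one]
    rw [Fintype.card_fun]
    push_cast
    simp
  · rw [if_neg h]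
    have hex : ∃ j0, (j0 ∈ S ∧ j0 ∉ S') ∨ (j0 ∈ S' ∧ j0 ∉ S) := by
      by_contra hc
      push_neg at hc
      exact h (Finset.ext fun j => by have := hc j; tauto)
    obtain ⟨j0, hj0⟩ := hex
    refine sum_involution_zero j0 _ fun x => ?_
    rcases hj0 with ⟨h1, h2⟩ | ⟨h1, h2⟩
    · rw [chi_update_mem h1, chi_update_not_mem h2]; ring
    · rw [chi_update_mem h1, chi_update_not_mem h2]; ring

end AuxProofS5

/-- From traversal avoidance to a risk lower bound, ensemble
version.  For any regression tree ensemble `fhat = (1/B) Σ_b tree b` whose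
leaf labels are within-leaf mean responses, with `|Y| ≤ M` a.s., any
subcollection `𝒮' ⊆ 𝒮` and any `T` with `|T ∩ S| ≥ 2` for `S ∈ 𝒮'`, the
expected `L²` risk is at least `(1 - κδ) Σ_{S ∈ 𝒮'} α_S²`, where
`δ := max_x P{J(x; D_n, Θ) ∩ T ≠ ∅}` and `κ := 2M/(Σ_{S ∈ 𝒮'} α_S²)^{1/2}`. -/
theorem traversal_avoidance_risk_lower_bound_ensemble
    {Ω : Type} [MeasurableSpace Ω]
    (μ : Measure Ω) [IsProbabilityMeasure μ]
    (d n s : ℕ)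
    (X : Fin n → Ω → Fin d → Bool) (eps : Fin n → Ω → ℝ) (Y : Fin n → Ω → ℝ)
    (hXmeas : ∀ i, Measurable (X i)) (hepsmeas : ∀ i, Measurable (eps i))
    (hXunif : ∀ i, Measure.map (X i) μ = (PMF.uniformOfFintype (Fin d → Bool)).toMeasure)
    (hXiid : iIndepFun X μ)
    (hepsiid : iIndepFun eps μ)
    (hepsident : ∀ i j, Measure.map (eps i) μ = Measure.map (eps j) μ)
    (hepsint : ∀ i, Integrable (eps i) μ)
    (hepsmean : ∀ i, ∫ ω, eps i ω ∂μ = 0)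
    (hXeps : IndepFun (fun ω i => X i ω) (fun ω i => eps i ω) μ)
    (Sstar : Finset (Fin d)) (hcard : Sstar.card = s)
    (f0 : (Fin d → Bool) → ℝ)
    (hsparse : ∀ x x' : Fin d → Bool, (∀ j ∈ Sstar, x j = x' j) → f0 x = f0 x')
    (hY : ∀ i ω, Y i ω = f0 (X i ω) + eps i ω)
    (B : ℕ) (hB : 0 < B)
    (tree : Fin B → Ω → (Fin d → Bool) → ℝ)
    (Jb : Fin B → Ω → (Fin d → Bool) → Finset (Fin d))
    (fhat : Ω → (Fin d → Bool) → ℝ)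
    (hfhat : ∀ ω x, fhat ω x = (∑ b, tree b ω x) / B)
    (Mb : ℝ) (hYb : ∀ᵐ ω ∂μ, ∀ i, |Y i ω| ≤ Mb)
    -- each tree predicts the mean response over (the samples in) its leaf
    (hmean : ∀ b ω x, ∃ I : Finset (Fin n), I.Nonempty ∧
        tree b ω x = (∑ i ∈ I, Y i ω) / I.card)
    (Sc' : Finset (Finset (Fin d))) (hSc' : Sc' ⊆ fourierSupport f0)
    (T : Finset (Fin d)) (hT : ∀ S ∈ Sc', 2 ≤ (T ∩ S).card)
    (htmeas : ∀ b x, Measurable fun ω => tree b ω x)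
    (hJmeas : ∀ b x, MeasurableSet {ω | ((Jb b ω x) ∩ T).Nonempty})
    (hloc : ∀ b ω x x', ¬ ((Jb b ω x) ∩ T).Nonempty → (∀ j, j ∉ T → x j = x' j) →
        tree b ω x = tree b ω x')
    (hev : ∀ b ω x x', (∀ j, j ∉ T → x j = x' j) →
        (((Jb b ω x) ∩ T).Nonempty ↔ ((Jb b ω x') ∩ T).Nonempty))
    (δ : ℝ) (hδ : ∀ b x, (μ {ω | ((Jb b ω x) ∩ T).Nonempty}).toReal ≤ δ) :
    ENNReal.ofReal
        ((1 - 2 * Mb / Real.sqrt (∑ S ∈ Sc', fourierCoeff f0 S ^ 2) * δ) *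
          ∑ S ∈ Sc', fourierCoeff f0 S ^ 2) ≤
      ∫⁻ ω, ENNReal.ofReal (cubeRisk (fhat ω) f0) ∂μ := by
  classical
  set W : ℝ := ∑ S ∈ Sc', fourierCoeff f0 S ^ 2 with hWdef
  have hWnn : 0 ≤ W := Finset.sum_nonneg fun _ _ => sq_nonneg _
  rcases eq_or_lt_of_le hWnn with hW0 | hWpos
  · rw [← hW0, mul_zero, ENNReal.ofReal_zero]
    exact zero_le
  have hWs : Real.sqrt W * Real.sqrt W = W := Real.mul_self_sqrt hWnn
  have hWspos : 0 < Real.sqrt W := Real.sqrt_pos.mpr hWpos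
  haveI hae : (MeasureTheory.ae μ).NeBot :=
    MeasureTheory.ae_neBot.mpr (IsProbabilityMeasure.ne_zero μ)
  obtain ⟨ω0, hω0⟩ := hYb.exists
  rcases Nat.eq_zero_or_pos n with hn0 | hn
  · obtain ⟨I, hIne, -⟩ := hmean ⟨0, hB⟩ ω0 (fun _ => true)
    obtain ⟨i, -⟩ := hIne
    exact absurd i.isLt (by omega)
  have hM : 0 ≤ Mb := le_trans (abs_nonneg _) (hω0 ⟨0, hn⟩)
  have hδ0 : 0 ≤ δ := le_trans ENNReal.toReal_nonneg (hδ ⟨0, hB⟩ (fun _ => true))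
  have hBpos : (0:ℝ) < B := by exact_mod_cast hB
  have hNpos : (0:ℝ) < 2 ^ d := by positivity
  set g : (Fin d → Bool) → ℝ := fun x => ∑ S ∈ Sc', fourierCoeff f0 S * chi S x with hgdef
  -- coefficient identities
  have hcoeff : ∀ S : Finset (Fin d),
      ∑ x : Fin d → Bool, f0 x * chi S x = 2 ^ d * fourierCoeff f0 S := by
    intro S
    rw [fourierCoeff, cubeMean]
    field_simp
  have hsum_f0g : ∑ x : Fin d → Bool, f0 x * g x = 2 ^ d * W := by
    simp only [hgdef, Finset.mul_sum]
    rw [Finset.sum_comm, hWdef, Finset.mul_sum]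
    refine Finset.sum_congr rfl fun S hS => ?_
    have h1 : ∑ x : Fin d → Bool, f0 x * (fourierCoeff f0 S * chi S x)
        = fourierCoeff f0 S * ∑ x : Fin d → Bool, f0 x * chi S x := by
      rw [Finset.mul_sum]; exact Finset.sum_congr rfl fun x _ => by ring
    rw [h1, hcoeff S]; ring
  have hsum_gg : ∑ x : Fin d → Bool, g x * g x = 2 ^ d * W := by
    simp only [hgdef]
    have h1 : ∀ x : Fin d → Bool,
        (∑ S ∈ Sc', fourierCoeff f0 S * chi S x) * (∑ S' ∈ Sc', fourierCoeff f0 S' * chi S' x)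
          = ∑ S ∈ Sc', ∑ S' ∈ Sc',
              (fourierCoeff f0 S * fourierCoeff f0 S') * (chi S x * chi S' x) := by
      intro x
      rw [Finset.sum_mul_sum]
      exact Finset.sum_congr rfl fun S _ => Finset.sum_congr rfl fun S' _ => by ring
    simp only [h1]
    rw [Finset.sum_comm, hWdef, Finset.mul_sum]
    refine Finset.sum_congr rfl fun S hS => ?_
    rw [Finset.sum_comm]
    have h2 : ∀ S' : Finset (Fin d),
        ∑ x : Fin d → Bool, (fourierCoeff f0 S * fourierCoeff f0 S') * (chi S x * chi S' x)
          = (fourierCoeff f0 S * fourierCoeff f0 S') * (if S = S' then (2:ℝ)^d else 0) := by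
      intro S'
      rw [← Finset.mul_sum, sum_chi_mul_chi]
    simp only [h2]
    rw [Finset.sum_eq_single S]
    · rw [if_pos rfl]; ring
    · intro S' _ hne
      rw [if_neg fun h => hne h.symm, mul_zero]
    · intro hnot; exact absurd hS hnot
  -- Bessel-type pointwise lower bound
  have key1 : ∀ F : (Fin d → Bool) → ℝ,
      W - 2 * ((∑ x : Fin d → Bool, F x * g x) / 2 ^ d) ≤ cubeRisk F f0 := by
    intro F
    have h0 : (0:ℝ) ≤ ∑ x : Fin d → Bool, (F x - f0 x + g x) ^ 2 :=
      Finset.sum_nonneg fun _ _ => sq_nonneg _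
    have hexp : ∑ x : Fin d → Bool, (F x - f0 x + g x) ^ 2
        = ∑ x : Fin d → Bool, (F x - f0 x) ^ 2
          + 2 * ∑ x : Fin d → Bool, F x * g x
          - 2 * ∑ x : Fin d → Bool, f0 x * g x
          + ∑ x : Fin d → Bool, g x * g x := by
      rw [Finset.mul_sum, Finset.mul_sum, ← Finset.sum_add_distrib, ← Finset.sum_sub_distrib,
        ← Finset.sum_add_distrib]
      exact Finset.sum_congr rfl fun x _ => by ring
    have hkey : 2 ^ d * W - 2 * ∑ x : Fin d → Bool, F x * g x
        ≤ ∑ x : Fin d → Bool, (F x - f0 x) ^ 2 := by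
      rw [hexp, hsum_f0g, hsum_gg] at h0
      linarith
    have hR : cubeRisk F f0 = (∑ x : Fin d → Bool, (F x - f0 x) ^ 2) / 2 ^ d := rfl
    have h2 : W - 2 * ((∑ x : Fin d → Bool, F x * g x) / 2 ^ d)
        = (2 ^ d * W - 2 * ∑ x : Fin d → Bool, F x * g x) / 2 ^ d := by
      field_simp
    rw [hR, h2]
    exact div_le_div_same' hkey hNpos
  -- the "avoidance part" of each tree is orthogonal to g
  have key2 : ∀ (b : Fin B) (ω : Ω),
      ∑ x : Fin d → Bool,
        (if ((Jb b ω x) ∩ T).Nonempty then (0:ℝ) else tree b ω x * g x) = 0 := by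
    intro b ω
    have hsplit : ∀ x : Fin d → Bool,
        (if ((Jb b ω x) ∩ T).Nonempty then (0:ℝ) else tree b ω x * g x)
          = ∑ S ∈ Sc', fourierCoeff f0 S *
              (if ((Jb b ω x) ∩ T).Nonempty then (0:ℝ) else tree b ω x * chi S x) := by
      intro x
      by_cases hx : ((Jb b ω x) ∩ T).Nonempty
      · simp [hx]
      · simp only [if_neg hx, hgdef, Finset.mul_sum]
        exact Finset.sum_congr rfl fun S _ => by ring
    simp only [hsplit]
    rw [Finset.sum_comm]
    refine Finset.sum_eq_zero fun S hS => ?_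
    have hScard := hT S hS
    obtain ⟨j0, hj0⟩ : ∃ j0, j0 ∈ T ∩ S := Finset.card_pos.mp (by omega)
    obtain ⟨hj0T, hj0S⟩ := Finset.mem_inter.mp hj0
    rw [← Finset.mul_sum]
    have hzero : ∑ x : Fin d → Bool,
        (if ((Jb b ω x) ∩ T).Nonempty then (0:ℝ) else tree b ω x * chi S x) = 0 := by
      refine sum_involution_zero j0 _ fun x => ?_
      have hagree : ∀ j, j ∉ T → x j = Function.update x j0 (!x j0) j := by
        intro j hj
        rw [Function.update_of_ne]
        rintro rfl; exact hj hj0T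
      have hiff := hev b ω x (Function.update x j0 (!x j0)) hagree
      by_cases hx : ((Jb b ω x) ∩ T).Nonempty
      · rw [if_pos hx, if_pos (hiff.mp hx), add_zero]
      · rw [if_neg hx, if_neg fun h => hx (hiff.mpr h),
          ← hloc b ω x (Function.update x j0 (!x j0)) hx hagree, chi_update_mem hj0S]
        ring
    rw [hzero, mul_zero]
  -- each tree prediction is bounded by Mb on the good event
  have htbound : ∀ (b : Fin B) (ω : Ω), (∀ i, |Y i ω| ≤ Mb) → ∀ x, |tree b ω x| ≤ Mb := by
    intro b ω hω x
    obtain ⟨I, hIne, hIeq⟩ := hmean b ω x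
    have hcard : (0:ℝ) < I.card := by exact_mod_cast Finset.card_pos.mpr hIne
    rw [hIeq, abs_div, abs_of_pos hcard, div_le_iff₀ hcard]
    calc |∑ i ∈ I, Y i ω| ≤ ∑ i ∈ I, |Y i ω| := Finset.abs_sum_le_sum_abs _ _
      _ ≤ ∑ i ∈ I, Mb := Finset.sum_le_sum fun i _ => hω i
      _ = Mb * I.card := by rw [Finset.sum_const, nsmul_eq_mul]; ring
  -- per-tree inequality
  have key3 : ∀ (b : Fin B) (ω : Ω), (∀ i, |Y i ω| ≤ Mb) →
      ∑ x : Fin d → Bool, tree b ω x * g x ≤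
        Mb * ∑ x : Fin d → Bool,
          |g x| * (if ((Jb b ω x) ∩ T).Nonempty then (1:ℝ) else 0) := by
    intro b ω hω
    have h1 : ∀ x : Fin d → Bool, tree b ω x * g x
        = (if ((Jb b ω x) ∩ T).Nonempty then tree b ω x * g x else 0)
          + (if ((Jb b ω x) ∩ T).Nonempty then (0:ℝ) else tree b ω x * g x) := by
      intro x; by_cases hx : ((Jb b ω x) ∩ T).Nonempty <;> simp [hx]
    have hsplit : ∑ x : Fin d → Bool, tree b ω x * g x
        = ∑ x : Fin d → Bool,
            (if ((Jb b ω x) ∩ T).Nonempty then tree b ω x * g x else 0) := by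
      have h2 := Finset.sum_congr rfl
        fun x (_ : x ∈ (Finset.univ : Finset (Fin d → Bool))) => h1 x
      rw [h2, Finset.sum_add_distrib, key2 b ω, add_zero]
    rw [hsplit, Finset.mul_sum]
    refine Finset.sum_le_sum fun x _ => ?_
    by_cases hx : ((Jb b ω x) ∩ T).Nonempty
    · rw [if_pos hx, if_pos hx, mul_one]
      calc tree b ω x * g x ≤ |tree b ω x * g x| := le_abs_self _
        _ = |tree b ω x| * |g x| := abs_mul _ _
        _ ≤ Mb * |g x| := mul_le_mul_of_nonneg_right (htbound b ω hω x) (abs_nonneg _)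
    · rw [if_neg hx, if_neg hx, mul_zero, mul_zero]
  -- the integrated indicator functional
  set ψ : Ω → ℝ := fun ω => ∑ b : Fin B, ∑ x : Fin d → Bool,
      |g x| * (if ((Jb b ω x) ∩ T).Nonempty then (1:ℝ) else 0) with hψdef
  have hIint : ∀ (b : Fin B) (x : Fin d → Bool),
      Integrable (fun ω => |g x| * (if ((Jb b ω x) ∩ T).Nonempty then (1:ℝ) else 0)) μ := by
    intro b x
    have heq : (fun ω => |g x| * (if ((Jb b ω x) ∩ T).Nonempty then (1:ℝ) else 0))
        = Set.indicator {ω | ((Jb b ω x) ∩ T).Nonempty} (fun _ => |g x|) := by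
      funext ω
      by_cases hx : ((Jb b ω x) ∩ T).Nonempty
      · simp [Set.indicator, hx]
      · simp [Set.indicator, hx]
    rw [heq]
    exact (integrable_const _).indicator (hJmeas b x)
  have hIval : ∀ (b : Fin B) (x : Fin d → Bool),
      ∫ ω, |g x| * (if ((Jb b ω x) ∩ T).Nonempty then (1:ℝ) else 0) ∂μ
        = (μ {ω | ((Jb b ω x) ∩ T).Nonempty}).toReal * |g x| := by
    intro b x
    have heq : (fun ω => |g x| * (if ((Jb b ω x) ∩ T).Nonempty then (1:ℝ) else 0))
        = Set.indicator {ω | ((Jb b ω x) ∩ T).Nonempty} (fun _ => |g x|) := by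
      funext ω
      by_cases hx : ((Jb b ω x) ∩ T).Nonempty
      · simp [Set.indicator, hx]
      · simp [Set.indicator, hx]
    rw [heq, MeasureTheory.integral_indicator_const _ (hJmeas b x), smul_eq_mul]
    rfl
  have hψint : Integrable ψ μ := by
    rw [hψdef]
    exact integrable_finset_sum _ fun b _ => integrable_finset_sum _ fun x _ => hIint b x
  have hψint_val : ∫ ω, ψ ω ∂μ ≤ B * (δ * ∑ x : Fin d → Bool, |g x|) := by
    have h1 : ∫ ω, ψ ω ∂μ = ∑ b : Fin B, ∑ x : Fin d → Bool,
        (μ {ω | ((Jb b ω x) ∩ T).Nonempty}).toReal * |g x| := by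
      simp only [hψdef]
      rw [integral_finset_sum _ fun b _ => integrable_finset_sum _ fun x _ => hIint b x]
      refine Finset.sum_congr rfl fun b _ => ?_
      rw [integral_finset_sum _ fun x _ => hIint b x]
      exact Finset.sum_congr rfl fun x _ => hIval b x
    rw [h1]
    calc ∑ b : Fin B, ∑ x : Fin d → Bool,
          (μ {ω | ((Jb b ω x) ∩ T).Nonempty}).toReal * |g x|
        ≤ ∑ b : Fin B, ∑ x : Fin d → Bool, δ * |g x| := by
          refine Finset.sum_le_sum fun b _ => Finset.sum_le_sum fun x _ => ?_
          exact mul_le_mul_of_nonneg_right (hδ b x) (abs_nonneg _)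
      _ = ∑ b : Fin B, δ * ∑ x : Fin d → Bool, |g x| :=
          Finset.sum_congr rfl fun b _ => (Finset.mul_sum _ _ _).symm
      _ = B * (δ * ∑ x : Fin d → Bool, |g x|) := by
          rw [Finset.sum_const, Finset.card_univ, Fintype.card_fin, nsmul_eq_mul]
  -- Cauchy–Schwarz on the cube
  have hgsum : ∑ x : Fin d → Bool, |g x| ≤ 2 ^ d * Real.sqrt W := by
    have h2 := Finset.sum_mul_sq_le_sq_mul_sq Finset.univ
      (fun _ : Fin d → Bool => (1:ℝ)) (fun x => |g x|)
    simp only [one_mul, one_pow] at h2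
    have h3 : ∑ x : Fin d → Bool, |g x| ^ 2 = 2 ^ d * W := by
      rw [← hsum_gg]
      exact Finset.sum_congr rfl fun x _ => by rw [sq_abs]; ring
    have h4 : ∑ _x : Fin d → Bool, (1:ℝ) = 2 ^ d := by
      rw [Finset.sum_const, Finset.card_univ, nsmul_eq_mul, mul_one, Fintype.card_fun]
      push_cast
      simp
    rw [h3, h4] at h2
    have hnn : 0 ≤ ∑ x : Fin d → Bool, |g x| := Finset.sum_nonneg fun _ _ => abs_nonneg _
    calc ∑ x : Fin d → Bool, |g x|
        = Real.sqrt ((∑ x : Fin d → Bool, |g x|) ^ 2) := (Real.sqrt_sq hnn).symm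
      _ ≤ Real.sqrt (2 ^ d * (2 ^ d * W)) := Real.sqrt_le_sqrt h2
      _ = 2 ^ d * Real.sqrt W := by
          rw [show (2:ℝ) ^ d * (2 ^ d * W) = ((2:ℝ) ^ d) ^ 2 * W by ring,
            Real.sqrt_mul (by positivity), Real.sqrt_sq (by positivity)]
  -- measurability and integrability of the risk
  have hfhatmeas : ∀ x, Measurable fun ω => fhat ω x := by
    intro x
    have h1 : (fun ω => fhat ω x) = fun ω => (∑ b : Fin B, tree b ω x) / B :=
      funext fun ω => hfhat ω x
    rw [h1]
    exact (Finset.measurable_sum _ fun b _ => htmeas b x).div_const _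
  have hRmeas : Measurable fun ω => cubeRisk (fhat ω) f0 := by
    have h1 : (fun ω => cubeRisk (fhat ω) f0)
        = fun ω => (∑ x : Fin d → Bool, (fhat ω x - f0 x) ^ 2) / 2 ^ d := rfl
    rw [h1]
    exact (Finset.measurable_sum _ fun x _ =>
      ((hfhatmeas x).sub measurable_const).pow_const 2).div_const _
  set C0 : ℝ := ∑ x : Fin d → Bool, |f0 x| with hC0def
  have hf0le : ∀ x, |f0 x| ≤ C0 := fun x =>
    Finset.single_le_sum (f := fun x => |f0 x|) (fun _ _ => abs_nonneg _) (Finset.mem_univ x)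
  have hRnn : ∀ ω, 0 ≤ cubeRisk (fhat ω) f0 := fun ω =>
    div_nonneg (Finset.sum_nonneg fun x _ => sq_nonneg _) hNpos.le
  have hRbdd : ∀ᵐ ω ∂μ, ‖cubeRisk (fhat ω) f0‖ ≤ (Mb + C0) ^ 2 := by
    filter_upwards [hYb] with ω hω
    have hfb : ∀ x, |fhat ω x| ≤ Mb := by
      intro x
      rw [hfhat, abs_div, abs_of_pos hBpos, div_le_iff₀ hBpos]
      calc |∑ b : Fin B, tree b ω x| ≤ ∑ b : Fin B, |tree b ω x| :=
            Finset.abs_sum_le_sum_abs _ _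
        _ ≤ ∑ b : Fin B, Mb := Finset.sum_le_sum fun b _ => htbound b ω hω x
        _ = Mb * B := by
            rw [Finset.sum_const, Finset.card_univ, Fintype.card_fin, nsmul_eq_mul]; ring
    have h1 : ∀ x : Fin d → Bool, (fhat ω x - f0 x) ^ 2 ≤ (Mb + C0) ^ 2 := by
      intro x
      have habs : |fhat ω x - f0 x| ≤ Mb + C0 := by
        have htri := abs_add_le (fhat ω x) (-f0 x)
        rw [abs_neg] at htri
        rw [sub_eq_add_neg]
        exact htri.trans (add_le_add (hfb x) (hf0le x))
      calc (fhat ω x - f0 x) ^ 2 = |fhat ω x - f0 x| ^ 2 := (sq_abs _).symm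
        _ ≤ (Mb + C0) ^ 2 := pow_le_pow_left₀ (abs_nonneg _) habs 2
    rw [Real.norm_eq_abs, abs_of_nonneg (hRnn ω)]
    have h2 : cubeRisk (fhat ω) f0
        = (∑ x : Fin d → Bool, (fhat ω x - f0 x) ^ 2) / 2 ^ d := rfl
    rw [h2, div_le_iff₀ hNpos]
    calc ∑ x : Fin d → Bool, (fhat ω x - f0 x) ^ 2
        ≤ ∑ _x : Fin d → Bool, (Mb + C0) ^ 2 := Finset.sum_le_sum fun x _ => h1 x
      _ = (Mb + C0) ^ 2 * 2 ^ d := by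
          rw [Finset.sum_const, Finset.card_univ, nsmul_eq_mul, Fintype.card_fun,
            Fintype.card_bool, Fintype.card_fin]
          push_cast
          ring
  have hRint : Integrable (fun ω => cubeRisk (fhat ω) f0) μ :=
    ⟨hRmeas.aestronglyMeasurable, HasFiniteIntegral.of_bounded hRbdd⟩
  -- a.e. pointwise lower bound on the risk
  set c : ℝ := 2 * Mb / (B * 2 ^ d) with hcdef
  have hc0 : 0 ≤ c := by rw [hcdef]; positivity
  have haeR : ∀ᵐ ω ∂μ, W - c * ψ ω ≤ cubeRisk (fhat ω) f0 := by
    filter_upwards [hYb] with ω hω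
    have hFg : ∑ x : Fin d → Bool, fhat ω x * g x
        = (∑ b : Fin B, ∑ x : Fin d → Bool, tree b ω x * g x) / B := by
      have h1 : ∀ x : Fin d → Bool,
          fhat ω x * g x = (∑ b : Fin B, tree b ω x * g x) / B := by
        intro x
        rw [hfhat, div_mul_eq_mul_div, Finset.sum_mul]
      have h2 := Finset.sum_congr rfl
        fun x (_ : x ∈ (Finset.univ : Finset (Fin d → Bool))) => h1 x
      rw [h2, ← Finset.sum_div, Finset.sum_comm]
    have hsum_le : ∑ x : Fin d → Bool, fhat ω x * g x ≤ Mb * ψ ω / B := by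
      rw [hFg]
      have h3 : ∑ b : Fin B, ∑ x : Fin d → Bool, tree b ω x * g x ≤ Mb * ψ ω := by
        rw [hψdef, Finset.mul_sum]
        exact Finset.sum_le_sum fun b _ => key3 b ω hω
      exact div_le_div_same' h3 hBpos
    have h4 : 2 * ((∑ x : Fin d → Bool, fhat ω x * g x) / 2 ^ d) ≤ c * ψ ω := by
      have h5 : 2 * ((Mb * ψ ω / B) / 2 ^ d) = c * ψ ω := by
        rw [hcdef]; field_simp
      rw [← h5]
      exact mul_le_mul_of_nonneg_left (div_le_div_same' hsum_le hNpos) (by norm_num)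
    linarith [key1 (fhat ω), h4]
  -- integrate
  have hint_low : Integrable (fun ω => W - c * ψ ω) μ :=
    (integrable_const W).sub (hψint.const_mul c)
  have hInt1 : W - c * ∫ ω, ψ ω ∂μ ≤ ∫ ω, cubeRisk (fhat ω) f0 ∂μ := by
    have h6 := integral_mono_ae hint_low hRint haeR
    rw [integral_sub (integrable_const W) (hψint.const_mul c), integral_const,
      MeasureTheory.integral_const_mul] at h6
    simpa [measure_univ] using h6
  have hψbound : c * ∫ ω, ψ ω ∂μ ≤ 2 * Mb * δ * Real.sqrt W := by
    calc c * ∫ ω, ψ ω ∂μ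
        ≤ c * (B * (δ * ∑ x : Fin d → Bool, |g x|)) :=
          mul_le_mul_of_nonneg_left hψint_val hc0
      _ ≤ c * (B * (δ * (2 ^ d * Real.sqrt W))) := by
          refine mul_le_mul_of_nonneg_left ?_ hc0
          refine mul_le_mul_of_nonneg_left ?_ hBpos.le
          exact mul_le_mul_of_nonneg_left hgsum hδ0
      _ = 2 * Mb * δ * Real.sqrt W := by
          rw [hcdef, div_mul_eq_mul_div, div_eq_iff (ne_of_gt (by positivity : (0:ℝ) < (B:ℝ) * 2 ^ d))]
          ring
  have hfinal : (1 - 2 * Mb / Real.sqrt W * δ) * W ≤ ∫ ω, cubeRisk (fhat ω) f0 ∂μ := by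
    have h8 : 2 * Mb / Real.sqrt W * δ * W = 2 * Mb * δ * Real.sqrt W := by
      rw [div_mul_eq_mul_div, div_mul_eq_mul_div, div_eq_iff hWspos.ne']
      linear_combination (-(2 * Mb * δ)) * hWs
    have h7 : (1 - 2 * Mb / Real.sqrt W * δ) * W = W - 2 * Mb * δ * Real.sqrt W := by
      rw [sub_mul, one_mul, h8]
    rw [h7]
    linarith [hInt1, hψbound]
  calc ENNReal.ofReal ((1 - 2 * Mb / Real.sqrt W * δ) * W)
      ≤ ENNReal.ofReal (∫ ω, cubeRisk (fhat ω) f0 ∂μ) := ENNReal.ofReal_le_ofReal hfinal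
    _ = ∫⁻ ω, ENNReal.ofReal (cubeRisk (fhat ω) f0) ∂μ :=
        MeasureTheory.ofReal_integral_eq_lintegral_ofReal hRint
          (Filter.Eventually.of_forall fun ω => hRnn ω)

end GreedyTrees
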